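/- Let G be a group acting linearly on a finite-dimensional real vector space V. If V admits no G-invariant inner product, then the set of v ∈ V whose orbit Gv is unbounded is dense in V (in fact contains the complement of a proper linear subspace). -/

import Mathlib

/-!
STATEMENT 4: Let `G` be a group acting linearly on a finite-dimensional real
vector space `V`.  If `V` admits no `G`-invariant inner product, then the set
of `v ∈ V` whose orbit `G v` is unbounded is dense in `V`; in fact it
contains the complement of a proper linear subspace.

A `G`-invariant inner product is encoded as a symmetric, positive definite
bilinear form `B` with `B (g v) (g w) = B v w` for all `g, v, w`.
-/

open MeasureTheory Bornology Topology

section aux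
variable {G : Type*} [Group G]
    {V : Type*} [NormedAddCommGroup V] [NormedSpace ℝ V] [FiniteDimensional ℝ V]

theorem exists_invariant_form (ρ : Representation ℝ G V)
    (hb : ∀ v : V, IsBounded (Set.range fun h : G => ρ h v)) :
    ∃ B : V →ₗ[ℝ] V →ₗ[ℝ] ℝ,
      (∀ v w : V, B v w = B w v) ∧
      (∀ v : V, v ≠ 0 → 0 < B v v) ∧
      (∀ (h : G) (v w : V), B (ρ h v) (ρ h w) = B v w) := by
  classical
  set M := V →L[ℝ] V with hM
  let f : G → M := fun g => LinearMap.toContinuousLinearMap (ρ g)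
  have hf_apply : ∀ g v, f g v = ρ g v := fun g v => rfl
  have hmul : ∀ g h : G, f (g * h) = f g * f h := by
    intro g h; ext v; simp [f, map_mul]
  have hone : f 1 = 1 := by ext v; simp [f]
  -- the units
  let u : G →* Mˣ :=
    { toFun := fun g => ⟨f g, f g⁻¹, by rw [← hmul, mul_inv_cancel, hone],
        by rw [← hmul, inv_mul_cancel, hone]⟩
      map_one' := Units.ext hone
      map_mul' := fun g h => Units.ext (hmul g h) }
  have hu_val : ∀ g, ((u g : Mˣ) : M) = f g := fun g => rfl
  -- uniform bound
  obtain ⟨C, hC⟩ : ∃ C, ∀ g : G, ‖f g‖ ≤ C := by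
    apply banach_steinhaus
    intro v
    obtain ⟨R, hR⟩ := (hb v).exists_norm_le
    exact ⟨R, fun g => hR _ ⟨g, rfl⟩⟩
  -- the closure subgroup
  let S : Subgroup Mˣ := u.range
  let K : Subgroup Mˣ := S.topologicalClosure
  let e : Mˣ → M × Mᵐᵒᵖ := Units.embedProduct M
  have hemb : IsEmbedding e := Units.isEmbedding_embedProduct
  have hrange : Set.range e =
      {p : M × Mᵐᵒᵖ | p.1 * p.2.unop = 1 ∧ p.2.unop * p.1 = 1} := by
    ext p
    constructor
    · rintro ⟨x, rfl⟩
      exact ⟨x.mul_inv, x.inv_mul⟩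
    · rintro ⟨h1, h2⟩
      exact ⟨⟨p.1, p.2.unop, h1, h2⟩, by simp [e, Units.embedProduct]⟩
  have hclosed : IsClosed (Set.range e) := by
    rw [hrange]
    exact (isClosed_eq (continuous_fst.mul
        (MulOpposite.continuous_unop.comp continuous_snd)) continuous_const).inter
      (isClosed_eq ((MulOpposite.continuous_unop.comp continuous_snd).mul
        continuous_fst) continuous_const)
  have hsub : e '' (S : Set Mˣ) ⊆
      (Metric.closedBall (0 : M) C) ×ˢ (MulOpposite.op '' Metric.closedBall (0 : M) C) := by
    rintro p ⟨x, hx, rfl⟩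
    obtain ⟨g, rfl⟩ := hx
    constructor
    · simpa [e, Units.embedProduct, hu_val] using hC g
    · refine ⟨f g⁻¹, by simpa using hC g⁻¹, rfl⟩
  have hcomp : IsCompact (closure (e '' (S : Set Mˣ))) := by
    refine IsCompact.of_isClosed_subset
      ((isCompact_closedBall _ _).prod
        ((isCompact_closedBall (0 : M) C).image MulOpposite.continuous_op))
      isClosed_closure
      (closure_minimal hsub (((isCompact_closedBall _ _).prod
        ((isCompact_closedBall (0 : M) C).image MulOpposite.continuous_op)).isClosed))
  have hKcomp : IsCompact (K : Set Mˣ) := by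
    rw [hemb.isCompact_iff]
    have himg : e '' (K : Set Mˣ) = closure (e '' (S : Set Mˣ)) ∩ Set.range e := by
      have h1 : (K : Set Mˣ) = e ⁻¹' closure (e '' (S : Set Mˣ)) := by
        rw [Subgroup.topologicalClosure_coe]
        exact hemb.closure_eq_preimage_closure_image _
      rw [h1, Set.image_preimage_eq_inter_range]
    rw [himg]
    exact hcomp.inter_right hclosed
  haveI : CompactSpace K := isCompact_iff_compactSpace.mp hKcomp
  haveI : Nonempty K := ⟨1⟩
  letI : MeasurableSpace K := borel K
  haveI : BorelSpace K := ⟨rfl⟩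
  let K₀ : TopologicalSpace.PositiveCompacts K :=
    ⟨⟨Set.univ, isCompact_univ⟩, by simp⟩
  let μ : Measure K := Measure.haarMeasure K₀
  haveI : IsProbabilityMeasure μ := ⟨by
    have := Measure.haarMeasure_self (K₀ := K₀)
    simpa [K₀] using this⟩
  -- base positive form
  let b := Module.finBasis ℝ V
  let P : V → V → ℝ := fun v w => ∑ i, b.repr v i * b.repr w i
  have hPsymm : ∀ v w, P v w = P w v := by
    intro v w; simp [P, mul_comm]
  have hPpos : ∀ v : V, v ≠ 0 → 0 < P v v := by
    intro v hv
    apply Finset.sum_pos'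
    · intro i _; exact mul_self_nonneg _
    · by_contra hcon
      push_neg at hcon
      apply hv
      have : ∀ i, b.repr v i = 0 := by
        intro i
        have := hcon i (Finset.mem_univ i)
        nlinarith [mul_self_nonneg (b.repr v i)]
      have hz : b.repr v = 0 := by ext i; simp [this]
      exact b.repr.map_eq_zero_iff.mp hz
  -- the action of K
  let c : K → M := fun k => (((k⁻¹ : K) : Mˣ) : M)
  have hc_cont : Continuous c :=
    Units.continuous_val.comp (continuous_subtype_val.comp continuous_inv)
  have hc_apply_cont : ∀ v : V, Continuous fun k : K => c k v := by
    intro v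
    exact (ContinuousLinearMap.apply ℝ V v).continuous.comp hc_cont
  -- integrand
  let F : V → V → K → ℝ := fun v w k => P (c k v) (c k w)
  have hcoord : ∀ i, Continuous fun x : V => b.repr x i := fun i =>
    (b.coord i).continuous_of_finiteDimensional
  have hF_cont : ∀ v w, Continuous (F v w) := by
    intro v w
    exact continuous_finset_sum _ fun i _ =>
      ((hcoord i).comp (hc_apply_cont v)).mul ((hcoord i).comp (hc_apply_cont w))
  have hF_int : ∀ v w, Integrable (F v w) μ := by
    intro v w
    exact (hF_cont v w).integrable_of_hasCompactSupport
      (IsCompact.of_isClosed_subset isCompact_univ (isClosed_tsupport _) (Set.subset_univ _))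
  -- linearity facts for P
  have hPadd : ∀ x x' w : V, P (x + x') w = P x w + P x' w := by
    intro x x' w; simp [P, map_add, add_mul, Finset.sum_add_distrib]
  have hPsmul : ∀ (a : ℝ) (x w : V), P (a • x) w = a * P x w := by
    intro a x w; simp [P, _root_.map_smul, Finset.mul_sum, mul_assoc]
  -- the averaged form
  let Bf : V → V → ℝ := fun v w => ∫ k, F v w k ∂μ
  have h1 : ∀ v v' w, Bf (v + v') w = Bf v w + Bf v' w := by
    intro v v' w
    have hpt : F (v + v') w = fun k => F v w k + F v' w k := by
      funext k; simp [F, map_add, hPadd]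
    simp only [Bf, hpt]
    exact integral_add (hF_int v w) (hF_int v' w)
  have h2 : ∀ (a : ℝ) (v w : V), Bf (a • v) w = a * Bf v w := by
    intro a v w
    have hpt : F (a • v) w = fun k => a * F v w k := by
      funext k; simp [F, _root_.map_smul, hPsmul]
    simp only [Bf, hpt]
    exact integral_const_mul a _
  have hsymm : ∀ v w, Bf v w = Bf w v := by
    intro v w
    simp only [Bf]
    congr 1; funext k; exact hPsymm _ _
  have h3 : ∀ v w w', Bf v (w + w') = Bf v w + Bf v w' := by
    intro v w w'; rw [hsymm, h1, hsymm w v, hsymm w' v]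
  have h4 : ∀ (a : ℝ) (v w : V), Bf v (a • w) = a * Bf v w := by
    intro a v w; rw [hsymm, h2, hsymm w v]
  let B : V →ₗ[ℝ] V →ₗ[ℝ] ℝ :=
    LinearMap.mk₂ ℝ Bf h1 (fun a v w => by simpa using h2 a v w) h3
      (fun a v w => by simpa using h4 a v w)
  have hB_apply : ∀ v w, B v w = Bf v w := fun v w => rfl
  refine ⟨B, ?_, ?_, ?_⟩
  · intro v w; rw [hB_apply, hB_apply]; exact hsymm v w
  · -- positivity
    intro v hv
    have hne : ∀ k : K, c k v ≠ 0 := by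
      intro k hzero
      apply hv
      have hunit : ((k : Mˣ) * ((k⁻¹ : K) : Mˣ)) = 1 := by
        rw [← Subgroup.coe_mul, mul_inv_cancel, Subgroup.coe_one]
      have hkv : ((k : Mˣ) : M) (c k v) = v := by
        calc ((k : Mˣ) : M) (c k v)
            = ((((k : Mˣ) * ((k⁻¹ : K) : Mˣ) : Mˣ)) : M) v := by
              rw [Units.val_mul, ContinuousLinearMap.mul_apply]
          _ = v := by rw [hunit, Units.val_one, ContinuousLinearMap.one_apply]
      rw [hzero, map_zero] at hkv
      exact hkv.symm
    have hposall : ∀ k : K, 0 < F v v k := fun k => hPpos _ (hne k)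
    obtain ⟨k₀, -, hk₀⟩ := isCompact_univ.exists_isMinOn (Set.univ_nonempty)
      (hF_cont v v).continuousOn
    rw [hB_apply]
    calc (0 : ℝ) < F v v k₀ := hposall k₀
      _ = ∫ _k, F v v k₀ ∂μ := by simp
      _ ≤ ∫ k, F v v k ∂μ := integral_mono (integrable_const _) (hF_int v v)
          (fun k => hk₀ (Set.mem_univ k))
  · -- invariance
    intro g v w
    have hgK : u g ∈ K := Subgroup.le_topologicalClosure S ⟨g, rfl⟩
    set a : K := ⟨u g, hgK⟩ with ha
    have hpt : ∀ k : K, F (ρ g v) (ρ g w) k = F v w (a⁻¹ * k) := by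
      intro k
      have hcompc : ∀ x : V, c (a⁻¹ * k) x = c k (ρ g x) := by
        intro x
        show ((((a⁻¹ * k)⁻¹ : K) : Mˣ) : M) x = (((k⁻¹ : K) : Mˣ) : M) (ρ g x)
        have hinv : ((a⁻¹ * k)⁻¹ : K) = k⁻¹ * a := by group
        rw [hinv]
        have : (((k⁻¹ * a : K) : Mˣ) : M) = (((k⁻¹ : K) : Mˣ) : M) * ((a : Mˣ) : M) := by
          simp [Units.val_mul]
        rw [this, ContinuousLinearMap.mul_apply]
        exact congrArg _ (hf_apply g x)
      simp only [F, hcompc]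
    rw [hB_apply, hB_apply]
    calc (∫ k, F (ρ g v) (ρ g w) k ∂μ) = ∫ k, F v w (a⁻¹ * k) ∂μ := by
          simp only [hpt]
      _ = ∫ k, F v w k ∂μ := integral_mul_left_eq_self (F v w) a⁻¹

end aux

theorem dense_unbounded_orbits_of_no_invariant_inner_product
    {G : Type*} [Group G]
    {V : Type*} [NormedAddCommGroup V] [NormedSpace ℝ V] [FiniteDimensional ℝ V]
    (ρ : Representation ℝ G V)
    (hno : ¬ ∃ B : V →ₗ[ℝ] V →ₗ[ℝ] ℝ,
      (∀ v w : V, B v w = B w v) ∧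
      (∀ v : V, v ≠ 0 → 0 < B v v) ∧
      (∀ (h : G) (v w : V), B (ρ h v) (ρ h w) = B v w)) :
    Dense {v : V | ¬ Bornology.IsBounded (Set.range fun h : G => ρ h v)} ∧
    ∃ W : Submodule ℝ V, W ≠ ⊤ ∧
      (W : Set V)ᶜ ⊆ {v : V | ¬ Bornology.IsBounded (Set.range fun h : G => ρ h v)} := by
  classical
  let W : Submodule ℝ V :=
    { carrier := {v : V | IsBounded (Set.range fun h : G => ρ h v)}
      add_mem' := by
        intro v w hv hw
        refine (hv.add hw).subset ?_
        rintro _ ⟨g, rfl⟩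
        exact ⟨ρ g v, ⟨g, rfl⟩, ρ g w, ⟨g, rfl⟩, (map_add _ _ _).symm⟩
      zero_mem' := by
        have hs : (Set.range fun h : G => ρ h (0 : V)) ⊆ {0} := by
          rintro _ ⟨g, rfl⟩; simp
        exact Bornology.isBounded_singleton.subset hs
      smul_mem' := by
        intro a v hv
        refine (hv.smul₀ a).subset ?_
        rintro _ ⟨g, rfl⟩
        exact ⟨ρ g v, ⟨g, rfl⟩, (map_smul _ _ _).symm⟩ }
  have hWmem : ∀ v : V, v ∈ W ↔ IsBounded (Set.range fun h : G => ρ h v) := fun v => Iff.rfl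
  have hWtop : W ≠ ⊤ := by
    intro htop
    exact hno (exists_invariant_form ρ (fun v => (hWmem v).mp (htop ▸ Submodule.mem_top)))
  have hsub : (W : Set V)ᶜ ⊆ {v : V | ¬ IsBounded (Set.range fun h : G => ρ h v)} :=
    fun v hv => hv
  refine ⟨?_, W, hWtop, hsub⟩
  have hint : interior (W : Set V) = ∅ := by
    by_contra h
    exact hWtop (Submodule.eq_top_of_nonempty_interior' W
      (Set.nonempty_iff_ne_empty.mpr h))
  exact (interior_eq_empty_iff_dense_compl.mp hint).mono hsub
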